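/- Let k be a field with algebraic closure k̄, and let F ∈ k[x,y] be a squarefree polynomial of total degree 2 whose homogeneous part F₂ of degree 2 is not of the form c·L² for any c ∈ k̄ and linear form L ∈ k̄[x,y] (equivalently, the projective closure of the conic Γ = V(F) meets the line at infinity of P² in two distinct points of P²(k̄)). Then every k-algebra automorphism φ of k[x,y] with φ(F) = cF for some c ∈ k* is affine, i.e. both φ(x) and φ(y) have total degree at most 1. -/

import Mathlib

open MvPolynomial

namespace AutConicAux

section Generic

variable {R σ τ : Type*} [CommSemiring R]

lemma sum_homComp_ge (p : MvPolynomial σ R) {N : ℕ} (h : p.totalDegree ≤ N) :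
    ∑ i ∈ Finset.range (N + 1), homogeneousComponent i p = p := by
  conv_rhs => rw [← sum_homogeneousComponent p]
  refine (Finset.sum_subset (Finset.range_subset_range.2 (by omega)) ?_).symm
  intro i _ hni
  simp only [Finset.mem_range, not_lt] at hni
  exact homogeneousComponent_eq_zero i p (by omega)

lemma homComp_of_isHomogeneous {p : MvPolynomial σ R} {n : ℕ} (h : p.IsHomogeneous n) :
    homogeneousComponent n p = p := by
  rw [homogeneousComponent_of_mem ((mem_homogeneousSubmodule n p).2 h), if_pos rfl]

lemma homComp_ne_of_isHomogeneous {p : MvPolynomial σ R} {m n : ℕ}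
    (h : p.IsHomogeneous n) (hmn : m ≠ n) : homogeneousComponent m p = 0 := by
  rw [homogeneousComponent_of_mem ((mem_homogeneousSubmodule n p).2 h), if_neg hmn]

lemma homComp_mul_top (P Q : MvPolynomial σ R) {m n : ℕ}
    (hP : P.totalDegree ≤ m) (hQ : Q.totalDegree ≤ n) :
    homogeneousComponent (m + n) (P * Q)
      = homogeneousComponent m P * homogeneousComponent n Q := by
  conv_lhs => rw [← sum_homComp_ge P hP, ← sum_homComp_ge Q hQ, Finset.sum_mul_sum]
  rw [map_sum]
  have key : ∀ i ∈ Finset.range (m + 1), ∀ j ∈ Finset.range (n + 1),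
      homogeneousComponent (m + n) (homogeneousComponent i P * homogeneousComponent j Q)
      = if i = m then (if j = n then homogeneousComponent m P * homogeneousComponent n Q else 0)
          else 0 := by
    intro i hi j hj
    simp only [Finset.mem_range] at hi hj
    rw [homogeneousComponent_of_mem ((mem_homogeneousSubmodule _ _).2
      ((homogeneousComponent_isHomogeneous i P).mul (homogeneousComponent_isHomogeneous j Q)))]
    by_cases h1 : i = m
    · by_cases h2 : j = n
      · subst h1; subst h2; simp
      · rw [if_neg (by omega), if_pos h1, if_neg h2]
    · rw [if_neg (by omega), if_neg h1]
  rw [Finset.sum_congr rfl (fun i hi => by rw [map_sum, Finset.sum_congr rfl (key i hi)])]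
  simp [Finset.sum_ite_eq', Finset.self_mem_range_succ]

lemma homComp_totalDegree_ne_zero {p : MvPolynomial σ R} (hp : p ≠ 0) :
    homogeneousComponent p.totalDegree p ≠ 0 := by
  obtain ⟨d, hd, hdeq⟩ := Finset.exists_mem_eq_sup p.support (support_nonempty.2 hp)
    (fun s => s.sum fun _ e => e)
  have hdeg : d.degree = p.totalDegree := by
    rw [MvPolynomial.totalDegree, hdeq]; rfl
  have hc : coeff d (homogeneousComponent p.totalDegree p) = coeff d p := by
    rw [coeff_homogeneousComponent, if_pos hdeg]
  intro h0
  rw [h0, coeff_zero] at hc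
  exact mem_support_iff.1 hd hc.symm

lemma homComp_aeval (g : σ → MvPolynomial τ R) (hg : ∀ i, (g i).IsHomogeneous 1)
    (p : MvPolynomial σ R) (n : ℕ) :
    homogeneousComponent n (aeval g p) = aeval g (homogeneousComponent n p) := by
  conv_lhs => rw [← sum_homComp_ge p le_rfl, map_sum, map_sum]
  have key : ∀ i, homogeneousComponent n (aeval g (homogeneousComponent i p))
      = if n = i then aeval g (homogeneousComponent i p) else 0 := by
    intro i
    have h := (homogeneousComponent_isHomogeneous i p).aeval g hg
    rw [one_mul] at h
    exact homogeneousComponent_of_mem ((mem_homogeneousSubmodule _ _).2 h)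
  simp only [key]
  rw [Finset.sum_ite_eq]
  by_cases hn : n ∈ Finset.range (p.totalDegree + 1)
  · rw [if_pos hn]
  · rw [if_neg hn, homogeneousComponent_eq_zero, map_zero]
    simp only [Finset.mem_range, not_lt] at hn; omega

lemma totalDegree_aeval_le (g : σ → MvPolynomial τ R) (hg : ∀ i, (g i).IsHomogeneous 1)
    (p : MvPolynomial σ R) : (aeval g p).totalDegree ≤ p.totalDegree := by
  conv_lhs => rw [← sum_homComp_ge p le_rfl, map_sum]
  refine (totalDegree_finset_sum _ _).trans ?_
  apply Finset.sup_le
  intro i hi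
  have h := (homogeneousComponent_isHomogeneous i p).aeval g hg
  rw [one_mul] at h
  exact h.totalDegree_le.trans (by simp only [Finset.mem_range] at hi; omega)

end Generic

section Fin2

variable {R : Type*} [CommSemiring R]

lemma deg2 (d : Fin 2 →₀ ℕ) : d.degree = d 0 + d 1 := by
  rw [Finsupp.degree_apply]
  rw [Finset.sum_subset (Finset.subset_univ d.support)
    (fun i _ hi => Finsupp.notMem_support_iff.mp hi)]
  simp [Fin.sum_univ_two]

lemma finsupp2_eq (d : Fin 2 →₀ ℕ) :
    d = Finsupp.single 0 (d 0) + Finsupp.single 1 (d 1) := by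
  ext x
  fin_cases x <;> simp [Finsupp.single_apply]

lemma expand2 (F : MvPolynomial (Fin 2) R) (hF : F.totalDegree ≤ 2) :
    F = C (coeff 0 F) + C (coeff (Finsupp.single 0 1) F) * X 0
      + C (coeff (Finsupp.single 1 1) F) * X 1
      + C (coeff (Finsupp.single 0 2) F) * X 0 ^ 2
      + C (coeff (Finsupp.single 0 1 + Finsupp.single 1 1) F) * (X 0 * X 1)
      + C (coeff (Finsupp.single 1 2) F) * X 1 ^ 2 := by
  have hX0 : (X 0 : MvPolynomial (Fin 2) R) = monomial (Finsupp.single 0 1) 1 := by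
    rw [← pow_one (X 0 : MvPolynomial (Fin 2) R), X_pow_eq_monomial]
  have hX1 : (X 1 : MvPolynomial (Fin 2) R) = monomial (Finsupp.single 1 1) 1 := by
    rw [← pow_one (X 1 : MvPolynomial (Fin 2) R), X_pow_eq_monomial]
  have hXX : (X 0 * X 1 : MvPolynomial (Fin 2) R)
      = monomial (Finsupp.single 0 1 + Finsupp.single 1 1) 1 := by
    rw [hX0, hX1, monomial_mul, mul_one]
  have hC : ∀ a : R, (C a : MvPolynomial (Fin 2) R) = monomial 0 a := fun a => rfl
  rw [hXX, X_pow_eq_monomial, X_pow_eq_monomial, hX0, hX1]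
  simp only [C_mul_monomial, mul_one]
  ext d
  simp only [coeff_add, coeff_monomial, hC]
  have hd := finsupp2_eq d
  by_cases hij : d 0 + d 1 ≤ 2
  · have h0 : d 0 ≤ 2 := by omega
    have h1 : d 1 ≤ 2 := by omega
    rw [hd]
    interval_cases h : d 0 <;> interval_cases h' : d 1 <;>
      simp_all [Finsupp.ext_iff, Fin.forall_fin_two, Finsupp.single_apply]
  · have key : ∀ μ : Fin 2 →₀ ℕ, μ 0 + μ 1 ≤ 2 → ¬ (μ = d) := by
      intro μ hμ hEq
      have h0 := DFunLike.congr_fun hEq 0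
      have h1 := DFunLike.congr_fun hEq 1
      omega
    have hL : coeff d F = 0 := by
      apply coeff_eq_zero_of_totalDegree_lt
      have : (∑ i ∈ d.support, d i) = d 0 + d 1 := deg2 d
      omega
    rw [hL, if_neg (key _ (by simp)), if_neg (key _ (by simp [Finsupp.single_apply])),
      if_neg (key _ (by simp [Finsupp.single_apply])),
      if_neg (key _ (by simp [Finsupp.single_apply])),
      if_neg (key _ (by simp [Finsupp.single_apply])),
      if_neg (key _ (by simp [Finsupp.single_apply]))]
    simp

lemma homComp2 (F : MvPolynomial (Fin 2) R) (hF : F.totalDegree ≤ 2) :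
    homogeneousComponent 2 F = C (coeff (Finsupp.single 0 2) F) * X 0 ^ 2
      + C (coeff (Finsupp.single 0 1 + Finsupp.single 1 1) F) * (X 0 * X 1)
      + C (coeff (Finsupp.single 1 2) F) * X 1 ^ 2 := by
  conv_lhs => rw [expand2 F hF]
  rw [map_add, map_add, map_add, map_add, map_add]
  rw [homogeneousComponent_C_mul, homogeneousComponent_C_mul, homogeneousComponent_C_mul,
    homogeneousComponent_C_mul, homogeneousComponent_C_mul]
  rw [homComp_ne_of_isHomogeneous (isHomogeneous_C _ _) (by norm_num),
    homComp_ne_of_isHomogeneous (isHomogeneous_X _ _) (by norm_num),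
    homComp_of_isHomogeneous (isHomogeneous_X_pow 0 2),
    homComp_of_isHomogeneous (isHomogeneous_X_pow 1 2),
    homComp_of_isHomogeneous (show ((X 0 * X 1 : MvPolynomial (Fin 2) R)).IsHomogeneous 2 from
      (isHomogeneous_X _ 0).mul (isHomogeneous_X _ 1))]
  rw [homComp_ne_of_isHomogeneous (isHomogeneous_X _ _) (by norm_num)]
  ring

end Fin2

section Field

variable {k : Type*} [Field k]

lemma prop_of_quad {u v : MvPolynomial (Fin 2) k} (hu : u ≠ 0) {A B Cc : k}
    (hABC : ¬ (A = 0 ∧ B = 0 ∧ Cc = 0))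
    (hrel : C A * (u * u) + C B * (u * v) + C Cc * (v * v) = 0) :
    ∃ γ : k, v = C γ * u := by
  set K := AlgebraicClosure k
  set f : k →+* K := (algebraMap k K : k →+* K) with hf
  have hinj : Function.Injective (MvPolynomial.map (σ := Fin 2) f) :=
    MvPolynomial.map_injective f f.injective
  set u' := MvPolynomial.map f u with hu'def
  set v' := MvPolynomial.map f v with hv'def
  have hu' : u' ≠ 0 := fun h => hu (hinj (by simpa using h))
  obtain ⟨a₀, a₁, b₀, b₁, hA, hB, hC, ha, hb⟩ :
      ∃ a₀ a₁ b₀ b₁ : K, f A = a₀ * b₀ ∧ f B = a₀ * b₁ + a₁ * b₀ ∧ f Cc = a₁ * b₁ ∧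
        ¬(a₀ = 0 ∧ a₁ = 0) ∧ ¬(b₀ = 0 ∧ b₁ = 0) := by
    by_cases hA0 : f A = 0
    · refine ⟨0, 1, f B, f Cc, by simp [hA0], by ring, by ring, by simp, ?_⟩
      rintro ⟨h1, h2⟩
      exact hABC ⟨f.injective (by simpa using hA0), f.injective (by simpa using h1),
        f.injective (by simpa using h2)⟩
    · obtain ⟨z, hz⟩ : ∃ z : K, f A * z ^ 2 + f B * z + f Cc = 0 := by
        obtain ⟨z, hz⟩ := IsAlgClosed.exists_root
          (Polynomial.C (f A) * Polynomial.X ^ 2 + Polynomial.C (f B) * Polynomial.X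
            + Polynomial.C (f Cc)) (by rw [Polynomial.degree_quadratic hA0]; decide)
        refine ⟨z, ?_⟩
        simpa [Polynomial.IsRoot] using hz
      exact ⟨1, -z, f A, f B + f A * z, by ring, by ring, by linear_combination hz,
        by simp, by simp [hA0]⟩
  have hrel' := congrArg (MvPolynomial.map f) hrel
  simp only [map_add, map_mul, MvPolynomial.map_C, map_zero, ← hu'def, ← hv'def] at hrel'
  rw [hA, hB, hC] at hrel'
  have hfact : (C a₀ * u' + C a₁ * v') * (C b₀ * u' + C b₁ * v') = 0 := by
    simp only [map_mul, map_add] at hrel' ⊢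
    linear_combination hrel'
  have inner : ∀ x₀ x₁ : K, ¬(x₀ = 0 ∧ x₁ = 0) → C x₀ * u' + C x₁ * v' = 0 →
      ∃ γ : k, v = C γ * u := by
    intro x₀ x₁ hx hzero
    have hx₁ : x₁ ≠ 0 := by
      intro h
      rw [h] at hzero
      simp only [map_zero, zero_mul, add_zero, mul_eq_zero, C_eq_zero] at hzero
      rcases hzero with h' | h'
      · exact hx ⟨h', h⟩
      · exact hu' h'
    have hv' : v' = C (-x₀ / x₁) * u' := by
      have h1 : C x₁ * v' = C (-x₀) * u' := by
        rw [map_neg, neg_mul]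
        linear_combination hzero
      have h2 : C (x₁⁻¹) * (C x₁ * v') = C (x₁⁻¹) * (C (-x₀) * u') := by rw [h1]
      rw [← mul_assoc, ← mul_assoc, ← map_mul, ← map_mul, inv_mul_cancel₀ hx₁, C_1,
        one_mul] at h2
      rw [h2, div_eq_inv_mul]
    obtain ⟨m, hm⟩ := exists_coeff_ne_zero hu
    refine ⟨coeff m v / coeff m u, ?_⟩
    apply hinj
    rw [map_mul, MvPolynomial.map_C, ← hu'def, ← hv'def, hv']
    have hcu : f (coeff m u) ≠ 0 := fun h => hm (f.injective (by simpa using h))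
    have hcoeff : f (coeff m v) = (-x₀ / x₁) * f (coeff m u) := by
      have hc := congrArg (coeff m) hv'
      simpa [coeff_map, coeff_C_mul, hv'def, hu'def] using hc
    have hγ : f (coeff m v / coeff m u) = -x₀ / x₁ := by
      rw [map_div₀, hcoeff]
      exact mul_div_cancel_right₀ _ hcu
    rw [hγ]
  rcases mul_eq_zero.1 hfact with h | h
  · exact inner a₀ a₁ ha h
  · exact inner b₀ b₁ hb h

/-- The shear `x ↦ x, y ↦ y + γ x` as an `AlgHom`. -/
noncomputable def L (γ : k) : MvPolynomial (Fin 2) k →ₐ[k] MvPolynomial (Fin 2) k :=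
  aeval ![X 0, X 1 + C γ * X 0]

lemma L_X0 (γ : k) : L γ (X 0) = X 0 := by simp [L]

lemma L_X1 (γ : k) : L γ (X 1) = X 1 + C γ * X 0 := by simp [L]

lemma L_comp (γ δ : k) : (L γ).comp (L δ) = L (γ + δ) := by
  apply MvPolynomial.algHom_ext
  intro i
  fin_cases i <;> simp [L, map_add, map_mul] <;> ring

lemma L_homog (γ : k) :
    ∀ i, ((![X 0, X 1 + C γ * X 0] : Fin 2 → MvPolynomial (Fin 2) k) i).IsHomogeneous 1 := by
  intro i
  fin_cases i
  · simpa using isHomogeneous_X k 0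
  · simpa using (isHomogeneous_X k 1).add ((isHomogeneous_X k 0).C_mul γ)

lemma L_id : L (0 : k) = AlgHom.id k _ := by
  apply MvPolynomial.algHom_ext
  intro i
  fin_cases i <;> simp [L]

lemma L_L (γ : k) (p : MvPolynomial (Fin 2) k) : L (-γ) (L γ p) = p := by
  rw [← AlgHom.comp_apply, L_comp, neg_add_cancel, L_id, AlgHom.id_apply]

lemma L_C (γ x : k) : L γ (C x) = C x := by
  rw [← MvPolynomial.algebraMap_eq]; exact (L γ).commutes x

lemma totalDegree_L_le (γ : k) (p : MvPolynomial (Fin 2) k) :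
    (L γ p).totalDegree ≤ p.totalDegree :=
  totalDegree_aeval_le _ (L_homog γ) p

lemma homComp_L (γ : k) (p : MvPolynomial (Fin 2) k) (n : ℕ) :
    homogeneousComponent n (L γ p) = L γ (homogeneousComponent n p) :=
  homComp_aeval _ (L_homog γ) p n

/-- The shear as an `AlgEquiv`. -/
noncomputable def τeq (γ : k) : MvPolynomial (Fin 2) k ≃ₐ[k] MvPolynomial (Fin 2) k :=
  AlgEquiv.ofAlgHom (L γ) (L (-γ))
    (by rw [L_comp]; simp [L_id]) (by rw [L_comp]; simp [L_id])

lemma τeq_apply (γ : k) (p : MvPolynomial (Fin 2) k) : τeq γ p = L γ p := rfl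

lemma τeq_symm_apply (γ : k) (p : MvPolynomial (Fin 2) k) : (τeq γ).symm p = L (-γ) p := rfl

lemma map_L {K : Type*} [Field K] (f : k →+* K) (γ : k) (P : MvPolynomial (Fin 2) k) :
    MvPolynomial.map f (L γ P) = L (f γ) (MvPolynomial.map f P) := by
  induction P using MvPolynomial.induction_on with
  | C a => simp [L_C, MvPolynomial.map_C]
  | add p q hp hq => simp only [map_add, hp, hq]
  | mul_X p i hp =>
    rw [map_mul, map_mul, map_mul, hp, map_mul]
    congr 1
    fin_cases i <;> simp [L_X0, L_X1, MvPolynomial.map_C]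

lemma algEquiv_C (e : MvPolynomial (Fin 2) k ≃ₐ[k] MvPolynomial (Fin 2) k) (x : k) :
    e (C x) = C x := by
  rw [← MvPolynomial.algebraMap_eq]; exact e.commutes x

lemma homComp_kill (x : k) (p : MvPolynomial (Fin 2) k) {N : ℕ} (h : p.totalDegree < N) :
    homogeneousComponent N (C x * p) = 0 := by
  rw [homogeneousComponent_C_mul, homogeneousComponent_eq_zero N p h, mul_zero]

lemma homComp_top_eq (x : k) (p q : MvPolynomial (Fin 2) k) {a b : ℕ}
    (hp : p.totalDegree ≤ a) (hq : q.totalDegree ≤ b) :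
    homogeneousComponent (a + b) (C x * (p * q))
      = C x * (homogeneousComponent a p * homogeneousComponent b q) := by
  rw [homogeneousComponent_C_mul, homComp_mul_top p q hp hq]

end Field


section Main

variable {k : Type*} [Field k]

lemma aux (n : ℕ) : ∀ (F : MvPolynomial (Fin 2) k), F.totalDegree = 2 →
    (¬ ∃ (c l₀ l₁ : AlgebraicClosure k),
      MvPolynomial.map (algebraMap k (AlgebraicClosure k)) (homogeneousComponent 2 F)
        = C c * (C l₀ * X 0 + C l₁ * X 1) ^ 2) →
    ∀ (φ : MvPolynomial (Fin 2) k ≃ₐ[k] MvPolynomial (Fin 2) k) (c : kˣ),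
    φ F = C (c : k) * F →
    (φ (X 0)).totalDegree + (φ (X 1)).totalDegree ≤ n →
    (φ (X 0)).totalDegree ≤ 1 ∧ (φ (X 1)).totalDegree ≤ 1 := by
  induction n with
  | zero =>
    intro F _ _ φ c _ hn
    omega
  | succ n IH =>
    intro F hdeg h2 φ c h hn
    by_cases hsmall : (φ (X 0)).totalDegree ≤ 1 ∧ (φ (X 1)).totalDegree ≤ 1
    · exact hsmall
    set p := φ (X 0) with hpdef
    set q := φ (X 1) with hqdef
    set a := p.totalDegree with hadef
    set b := q.totalDegree with hbdef
    have hF0 : F ≠ 0 := by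
      intro h0
      rw [h0, totalDegree_zero] at hdeg
      omega
    have hCconst : ∀ x : k, φ (C x) = C x := fun x => algEquiv_C φ x
    have hp0 : p ≠ 0 := fun h0 =>
      MvPolynomial.X_ne_zero 0 (φ.injective (by rw [map_zero]; exact h0))
    have hq0 : q ≠ 0 := fun h0 =>
      MvPolynomial.X_ne_zero 1 (φ.injective (by rw [map_zero]; exact h0))
    have hXC : ∀ (i : Fin 2) (e : k), (X i : MvPolynomial (Fin 2) k) ≠ C e := by
      intro i e hEq
      have hco := congrArg (coeff (Finsupp.single i 1)) hEq
      rw [coeff_X, coeff_C] at hco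
      have hne : (0 : Fin 2 →₀ ℕ) ≠ Finsupp.single i 1 := by
        intro h'
        have h'' := DFunLike.congr_fun h' i
        simp at h''
      rw [if_neg hne] at hco
      simp at hco
    have hdeg1 : ∀ i : Fin 2, 1 ≤ (φ (X i)).totalDegree := by
      intro i
      by_contra hlt
      have h0 : (φ (X i)).totalDegree = 0 := by omega
      have hhom0 : (φ (X i)).IsHomogeneous 0 := by
        rwa [← totalDegree_zero_iff_isHomogeneous]
      have hhom := homComp_of_isHomogeneous hhom0
      rw [homogeneousComponent_zero] at hhom
      exact hXC i _ (φ.injective (by rw [hCconst]; exact hhom.symm))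
    have ha1 : 1 ≤ a := hdeg1 0
    have hb1 : 1 ≤ b := hdeg1 1
    set c00 := coeff 0 F with hc00def
    set c10 := coeff (Finsupp.single 0 1) F with hc10def
    set c01 := coeff (Finsupp.single 1 1) F with hc01def
    set A := coeff (Finsupp.single 0 2) F with hAdef
    set Bc := coeff (Finsupp.single 0 1 + Finsupp.single 1 1) F with hBcdef
    set Cc := coeff (Finsupp.single 1 2) F with hCcdef
    have hexp := expand2 F hdeg.le
    rw [← hc00def, ← hc10def, ← hc01def, ← hAdef, ← hBcdef, ← hCcdef] at hexp
    have hL1 := homComp2 F hdeg.le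
    rw [← hAdef, ← hBcdef, ← hCcdef] at hL1
    have hF2ne : homogeneousComponent 2 F ≠ 0 := by
      have := homComp_totalDegree_ne_zero hF0
      rwa [hdeg] at this
    have hφF : φ F = C c00 + C c10 * p + C c01 * q + C A * p ^ 2 + C Bc * (p * q)
        + C Cc * q ^ 2 := by
      conv_lhs => rw [hexp]
      simp only [map_add, map_mul, map_pow, hCconst, ← hpdef, ← hqdef]
    have hhc : ∀ N : ℕ, 2 < N → homogeneousComponent N (φ F) = 0 := by
      intro N hN
      rw [h, homogeneousComponent_C_mul, homogeneousComponent_eq_zero N F (by omega), mul_zero]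
    rcases Nat.lt_trichotomy a b with hab | hab | hab
    · -- a < b : contradiction with h2
      exfalso
      have hb2 : 2 ≤ b := by omega
      have hu : homogeneousComponent a p ≠ 0 := homComp_totalDegree_ne_zero hp0
      have hv : homogeneousComponent b q ≠ 0 := homComp_totalDegree_ne_zero hq0
      have e1 := hhc (b + b) (by omega)
      rw [hφF, map_add, map_add, map_add, map_add, map_add,
        homComp_ne_of_isHomogeneous (isHomogeneous_C _ c00) (by omega),
        homComp_kill c10 p (by omega),
        homComp_kill c01 q (by omega),
        sq p, homComp_kill A (p * p) ((totalDegree_mul p p).trans_lt (by omega)),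
        homComp_kill Bc (p * q) ((totalDegree_mul p q).trans_lt (by omega)),
        sq q, homComp_top_eq Cc q q le_rfl le_rfl] at e1
      simp only [zero_add] at e1
      have hCc0 : Cc = 0 := by
        rcases mul_eq_zero.1 e1 with h' | h'
        · exact C_eq_zero.1 h'
        · exact absurd h' (mul_ne_zero hv hv)
      have e2 := hhc (a + b) (by omega)
      rw [hφF, hCc0, C_0, zero_mul, add_zero, map_add, map_add, map_add, map_add,
        homComp_ne_of_isHomogeneous (isHomogeneous_C _ c00) (by omega),
        homComp_kill c10 p (by omega),
        homComp_kill c01 q (by omega),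
        sq p, homComp_kill A (p * p) ((totalDegree_mul p p).trans_lt (by omega)),
        homComp_top_eq Bc p q le_rfl le_rfl] at e2
      simp only [zero_add] at e2
      have hBc0 : Bc = 0 := by
        rcases mul_eq_zero.1 e2 with h' | h'
        · exact C_eq_zero.1 h'
        · exact absurd h' (mul_ne_zero hu hv)
      apply h2
      refine ⟨algebraMap k (AlgebraicClosure k) A, 1, 0, ?_⟩
      rw [hL1, hBc0, hCc0]
      simp only [C_0, C_1, zero_mul, one_mul, add_zero, zero_add, map_add, map_mul,
        MvPolynomial.map_C, map_pow, MvPolynomial.map_X]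
      try ring
    · -- a = b : reduction
      have ha2 : 2 ≤ a := by omega
      have hu : homogeneousComponent a p ≠ 0 := homComp_totalDegree_ne_zero hp0
      have hv : homogeneousComponent a q ≠ 0 := by
        rw [hab]; exact homComp_totalDegree_ne_zero hq0
      have e1 := hhc (a + a) (by omega)
      rw [hφF, map_add, map_add, map_add, map_add, map_add,
        homComp_ne_of_isHomogeneous (isHomogeneous_C _ c00) (by omega),
        homComp_kill c10 p (by omega),
        homComp_kill c01 q (by omega),
        sq p, homComp_top_eq A p p le_rfl le_rfl,
        homComp_top_eq Bc p q le_rfl (by omega),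
        sq q, homComp_top_eq Cc q q (by omega) (by omega)] at e1
      simp only [zero_add] at e1
      set u := homogeneousComponent a p with hudef
      set v := homogeneousComponent a q with hvdef
      have hrel : C A * (u * u) + C Bc * (u * v) + C Cc * (v * v) = 0 := by
        rw [hudef, hvdef]; exact e1
      have hABC : ¬ (A = 0 ∧ Bc = 0 ∧ Cc = 0) := by
        rintro ⟨h1, h2', h3⟩
        apply hF2ne
        rw [hL1, h1, h2', h3]
        simp
      obtain ⟨γ, hγ⟩ := prop_of_quad hu hABC hrel
      set w := q - C γ * p with hwdef
      have hwne : w ≠ 0 := by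
        intro h0
        rw [hwdef] at h0
        have hq' : q = C γ * p := by rwa [sub_eq_zero] at h0
        have hx : (X 1 : MvPolynomial (Fin 2) k) = C γ * X 0 :=
          φ.injective (by rw [map_mul, hCconst]; exact hq')
        have hco := congrArg (coeff (Finsupp.single 1 1)) hx
        rw [coeff_X, coeff_C_mul, coeff_X'] at hco
        rw [if_neg (show (Finsupp.single 0 1 : Fin 2 →₀ ℕ) ≠ Finsupp.single 1 1 by
          intro h'
          have h'' := DFunLike.congr_fun h' 0
          simp at h''), mul_zero] at hco
        simp at hco
      have hwd : w.totalDegree < a := by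
        have hle : w.totalDegree ≤ a := by
          rw [hwdef]
          refine (totalDegree_sub q (C γ * p)).trans (max_le (by omega) ?_)
          exact (totalDegree_mul _ _).trans (by rw [totalDegree_C]; omega)
        rcases Nat.lt_or_ge w.totalDegree a with h' | h'
        · exact h'
        · exfalso
          have heqd : w.totalDegree = a := by omega
          have hne := homComp_totalDegree_ne_zero hwne
          rw [heqd] at hne
          apply hne
          rw [hwdef, map_sub, homogeneousComponent_C_mul, ← hudef, ← hvdef, hγ, sub_self]
      set ψ : MvPolynomial (Fin 2) k ≃ₐ[k] MvPolynomial (Fin 2) k :=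
        ((τeq (-γ)).trans φ).trans (τeq (-γ)).symm with hψdef
      set F' := (τeq (-γ)).symm F with hF'def
      have hF'L : F' = L γ F := by rw [hF'def, τeq_symm_apply, neg_neg]
      have hFback : L (-γ) F' = F := by rw [hF'L, L_L]
      have hψ0 : ψ (X 0) = L γ p := by
        rw [hψdef]
        simp only [AlgEquiv.trans_apply]
        rw [τeq_apply, τeq_symm_apply, neg_neg, L_X0, ← hpdef]
      have hψ1 : ψ (X 1) = L γ w := by
        rw [hψdef]
        simp only [AlgEquiv.trans_apply]
        rw [τeq_apply, τeq_symm_apply, neg_neg, L_X1]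
        congr 1
        rw [map_add, map_mul, hCconst, ← hpdef, ← hqdef, hwdef, map_neg, neg_mul]
        ring
      have hF'deg : F'.totalDegree = 2 := by
        refine le_antisymm ?_ ?_
        · rw [hF'L]
          exact (totalDegree_L_le γ F).trans (by omega)
        · have hle2 : F.totalDegree ≤ F'.totalDegree := by
            conv_lhs => rw [← hFback]
            exact totalDegree_L_le (-γ) F'
          omega
      have h2' : ¬ ∃ (c' l₀ l₁ : AlgebraicClosure k),
          MvPolynomial.map (algebraMap k (AlgebraicClosure k)) (homogeneousComponent 2 F')
            = C c' * (C l₀ * X 0 + C l₁ * X 1) ^ 2 := by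
        rintro ⟨c', l₀, l₁, heq⟩
        set γ' : AlgebraicClosure k := algebraMap k (AlgebraicClosure k) γ with hγ'def
        rw [hF'L, homComp_L, map_L] at heq
        apply h2
        refine ⟨c', l₀ - l₁ * γ', l₁, ?_⟩
        have hQ := congrArg (L (-γ')) heq
        rw [L_L] at hQ
        rw [hQ, map_mul, map_pow, map_add, map_mul, map_mul, L_C, L_C, L_C, L_X0, L_X1]
        rw [map_sub, map_mul]
        simp only [map_neg]
        ring
      have hτF : τeq (-γ) F' = F := by rw [hF'def]; exact (τeq (-γ)).apply_symm_apply F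
      have hinv' : ψ F' = C (c : k) * F' := by
        rw [hψdef]
        simp only [AlgEquiv.trans_apply]
        rw [hτF, h, map_mul, algEquiv_C, hF'def]
      have hsum : (ψ (X 0)).totalDegree + (ψ (X 1)).totalDegree ≤ n := by
        have h1 : (ψ (X 0)).totalDegree ≤ a := by
          rw [hψ0]; exact totalDegree_L_le γ p
        have h2'' : (ψ (X 1)).totalDegree ≤ w.totalDegree := by
          rw [hψ1]; exact totalDegree_L_le γ w
        omega
      obtain ⟨hr0, hr1⟩ := IH F' hF'deg h2' ψ c hinv' hsum
      rw [hψ0] at hr0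
      rw [hψ1] at hr1
      have hpdeg : a ≤ 1 := by
        have hle3 : p.totalDegree ≤ (L γ p).totalDegree := by
          conv_lhs => rw [← L_L γ p]
          exact totalDegree_L_le (-γ) (L γ p)
        omega
      have hwdeg1 : w.totalDegree ≤ (L γ w).totalDegree := by
        conv_lhs => rw [← L_L γ w]
        exact totalDegree_L_le (-γ) (L γ w)
      have hqdeg : b ≤ 1 := by
        have hq'' : q = w + C γ * p := by rw [hwdef]; ring
        have h4 : q.totalDegree ≤ max w.totalDegree (C γ * p).totalDegree := by
          conv_lhs => rw [hq'']
          exact totalDegree_add w (C γ * p)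
        have h3 : (C γ * p).totalDegree ≤ a :=
          (totalDegree_mul _ _).trans (by rw [totalDegree_C]; omega)
        omega
      exact ⟨hpdeg, hqdeg⟩
    · -- b < a : contradiction with h2 (symmetric)
      exfalso
      have ha2 : 2 ≤ a := by omega
      have hu : homogeneousComponent a p ≠ 0 := homComp_totalDegree_ne_zero hp0
      have hv : homogeneousComponent b q ≠ 0 := homComp_totalDegree_ne_zero hq0
      have e1 := hhc (a + a) (by omega)
      rw [hφF, map_add, map_add, map_add, map_add, map_add,
        homComp_ne_of_isHomogeneous (isHomogeneous_C _ c00) (by omega),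
        homComp_kill c10 p (by omega),
        homComp_kill c01 q (by omega),
        sq p, homComp_top_eq A p p le_rfl le_rfl,
        homComp_kill Bc (p * q) ((totalDegree_mul p q).trans_lt (by omega)),
        sq q, homComp_kill Cc (q * q) ((totalDegree_mul q q).trans_lt (by omega))] at e1
      simp only [zero_add, add_zero] at e1
      have hA0 : A = 0 := by
        rcases mul_eq_zero.1 e1 with h' | h'
        · exact C_eq_zero.1 h'
        · exact absurd h' (mul_ne_zero hu hu)
      have e2 := hhc (a + b) (by omega)
      rw [hφF, hA0, C_0, zero_mul, add_zero, map_add, map_add, map_add, map_add,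
        homComp_ne_of_isHomogeneous (isHomogeneous_C _ c00) (by omega),
        homComp_kill c10 p (by omega),
        homComp_kill c01 q (by omega),
        homComp_top_eq Bc p q le_rfl le_rfl,
        sq q, homComp_kill Cc (q * q) ((totalDegree_mul q q).trans_lt (by omega))] at e2
      simp only [zero_add, add_zero] at e2
      have hBc0 : Bc = 0 := by
        rcases mul_eq_zero.1 e2 with h' | h'
        · exact C_eq_zero.1 h'
        · exact absurd h' (mul_ne_zero hu hv)
      apply h2
      refine ⟨algebraMap k (AlgebraicClosure k) Cc, 0, 1, ?_⟩
      rw [hL1, hBc0, hA0]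
      simp only [C_0, C_1, zero_mul, one_mul, add_zero, zero_add, map_add, map_mul,
        MvPolynomial.map_C, map_pow, MvPolynomial.map_X]
      try ring

end Main

end AutConicAux

/-- every automorphism of `𝔸²` preserving a squarefree conic whose
projective closure meets the line at infinity in two distinct points (i.e. whose degree-2
homogeneous part is not a multiple of the square of a linear form over `k̄`) is affine. -/
theorem aut_of_conic_is_affine {k : Type*} [Field k] (F : MvPolynomial (Fin 2) k)
    (hsf : Squarefree F) (hdeg : F.totalDegree = 2)
    (h2 : ¬ ∃ (c l₀ l₁ : AlgebraicClosure k),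
      MvPolynomial.map (algebraMap k (AlgebraicClosure k)) (homogeneousComponent 2 F)
        = C c * (C l₀ * X 0 + C l₁ * X 1) ^ 2)
    (φ : MvPolynomial (Fin 2) k ≃ₐ[k] MvPolynomial (Fin 2) k) (c : kˣ)
    (h : φ F = C (c : k) * F) :
    (φ (X 0)).totalDegree ≤ 1 ∧ (φ (X 1)).totalDegree ≤ 1 :=
  AutConicAux.aux ((φ (X 0)).totalDegree + (φ (X 1)).totalDegree) F hdeg h2 φ c h le_rfl
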